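/- Let S ⊂ ℝ^m be a finite set whose convex hull P has nonempty interior and let c : S → ℝ_{>0}. Fix x ∈ P° and define Λ^x(τ) := log Σ_{α∈S} m_{S,c,α}(x) e^{⟨α,τ⟩} and the Legendre transform I^x(y) := sup_{τ∈ℝ^m} { ⟨y,τ⟩ − Λ^x(τ) }. Then: (i) for every y ∈ P°, I^x(y) = δ_{S,c}(x) − δ_{S,c}(y) + ⟨x−y, τ_{S,c}(x)⟩; and (ii) for every y ∉ P, I^x(y) = +∞. -/

import Mathlib

open MeasureTheory Filter Set
open scoped RealInnerProductSpace ENNReal Topology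

noncomputable section

/-- `χ_{S,c}(τ) = Σ_{α∈S} c(α) e^{⟨α,τ⟩}`. -/
def chiSc {m : ℕ} (S : Finset (EuclideanSpace ℝ (Fin m)))
    (c : EuclideanSpace ℝ (Fin m) → ℝ) (τ : EuclideanSpace ℝ (Fin m)) : ℝ :=
  ∑ α ∈ S, c α * Real.exp ⟪α, τ⟫

/-- The moment map `μ_{S,c}(τ) = Σ_{α∈S} (c(α) e^{⟨α,τ⟩} / χ_{S,c}(τ)) · α`. -/
def muSc {m : ℕ} (S : Finset (EuclideanSpace ℝ (Fin m)))
    (c : EuclideanSpace ℝ (Fin m) → ℝ) (τ : EuclideanSpace ℝ (Fin m)) :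
    EuclideanSpace ℝ (Fin m) :=
  (chiSc S c τ)⁻¹ • ∑ α ∈ S, (c α * Real.exp ⟪α, τ⟫) • α

/-- `m_{S,c,α}(x) = c(α) e^{⟨α,τ_{S,c}(x)⟩} / χ_{S,c}(τ_{S,c}(x))`, for a given inverse
`τSc` of the moment map. -/
def mSc {m : ℕ} (S : Finset (EuclideanSpace ℝ (Fin m)))
    (c : EuclideanSpace ℝ (Fin m) → ℝ)
    (τSc : EuclideanSpace ℝ (Fin m) → EuclideanSpace ℝ (Fin m))
    (α x : EuclideanSpace ℝ (Fin m)) : ℝ :=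
  c α * Real.exp ⟪α, τSc x⟫ / chiSc S c (τSc x)

lemma chiSc_pos {m : ℕ} {S : Finset (EuclideanSpace ℝ (Fin m))}
    {c : EuclideanSpace ℝ (Fin m) → ℝ} (hS : S.Nonempty)
    (hc : ∀ α ∈ S, 0 < c α) (τ : EuclideanSpace ℝ (Fin m)) : 0 < chiSc S c τ :=
  Finset.sum_pos (fun α hα => mul_pos (hc α hα) (Real.exp_pos _)) hS

/-- Jensen: the Legendre transform of `log χ` at `y` is attained at any `τy`
with `μ(τy) = y`. -/
lemma legendre_max {m : ℕ} {S : Finset (EuclideanSpace ℝ (Fin m))}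
    {c : EuclideanSpace ℝ (Fin m) → ℝ} (hS : S.Nonempty)
    (hc : ∀ α ∈ S, 0 < c α) {y τy : EuclideanSpace ℝ (Fin m)}
    (hμ : muSc S c τy = y) (σ : EuclideanSpace ℝ (Fin m)) :
    ⟪y, σ⟫ - Real.log (chiSc S c σ) ≤ ⟪y, τy⟫ - Real.log (chiSc S c τy) := by
  have hχy := chiSc_pos hS hc τy
  have hχσ := chiSc_pos hS hc σ
  set w : EuclideanSpace ℝ (Fin m) → ℝ :=
    fun α => c α * Real.exp ⟪α, τy⟫ / chiSc S c τy with hw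
  have hw0 : ∀ α ∈ S, 0 ≤ w α := fun α hα =>
    div_nonneg (mul_pos (hc α hα) (Real.exp_pos _)).le hχy.le
  have hw1 : ∑ α ∈ S, w α = 1 := by
    rw [hw, ← Finset.sum_div]
    exact div_self hχy.ne'
  -- `⟪y, σ - τy⟫ = ∑ w α • ⟪α, σ - τy⟫`
  have hyw : ⟪y, σ - τy⟫ = ∑ α ∈ S, w α • ⟪α, σ - τy⟫ := by
    rw [← hμ, muSc, real_inner_smul_left, sum_inner]
    rw [Finset.mul_sum]
    refine Finset.sum_congr rfl fun α hα => ?_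
    rw [real_inner_smul_left, hw]
    simp only [smul_eq_mul]
    ring
  -- Jensen for exp
  have hjen : Real.exp ⟪y, σ - τy⟫ ≤ ∑ α ∈ S, w α • Real.exp ⟪α, σ - τy⟫ := by
    rw [hyw]
    exact convexOn_exp.map_sum_le hw0 hw1 (fun _ _ => Set.mem_univ _)
  -- identify RHS with `χ(σ)/χ(τy)`
  have hsum : ∑ α ∈ S, w α • Real.exp ⟪α, σ - τy⟫ = chiSc S c σ / chiSc S c τy := by
    rw [chiSc, Finset.sum_div]
    refine Finset.sum_congr rfl fun α hα => ?_
    have : ⟪α, τy⟫ + ⟪α, σ - τy⟫ = ⟪α, σ⟫ := by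
      rw [inner_sub_right]; ring
    rw [smul_eq_mul, ← this, Real.exp_add, hw]
    ring
  have key : chiSc S c τy * Real.exp ⟪y, σ - τy⟫ ≤ chiSc S c σ := by
    rw [hsum] at hjen
    calc chiSc S c τy * Real.exp ⟪y, σ - τy⟫
        ≤ chiSc S c τy * (chiSc S c σ / chiSc S c τy) :=
          mul_le_mul_of_nonneg_left hjen hχy.le
      _ = chiSc S c σ := by field_simp
  have := Real.log_le_log (mul_pos hχy (Real.exp_pos _)) key
  rw [Real.log_mul hχy.ne' (Real.exp_pos _).ne', Real.log_exp,
    inner_sub_right] at this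
  linarith

/-- The Cramér rate function `I^x = (Λ^x)^*` of the finitely supported
Bernstein measure `dB_x = Σ_α m_{S,c,α}(x) δ_α`, for `x ∈ P°`: it equals
`δ_{S,c}(x) − δ_{S,c}(y) + ⟨x−y, τ_{S,c}(x)⟩` on `P°`, and `+∞` outside `P`. -/
theorem rateFunction_formula
    {m : ℕ} (S : Finset (EuclideanSpace ℝ (Fin m)))
    (c : EuclideanSpace ℝ (Fin m) → ℝ) (hc : ∀ α ∈ S, 0 < c α)
    (P : Set (EuclideanSpace ℝ (Fin m)))
    (hP : P = convexHull ℝ (S : Set (EuclideanSpace ℝ (Fin m))))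
    (hPo : (interior P).Nonempty)
    (τSc : EuclideanSpace ℝ (Fin m) → EuclideanSpace ℝ (Fin m))
    (hτ₁ : ∀ τ, τSc (muSc S c τ) = τ)
    (hτ₂ : ∀ x ∈ interior P, muSc S c (τSc x) = x)
    (x : EuclideanSpace ℝ (Fin m)) (hx : x ∈ interior P) :
    (let Λ : EuclideanSpace ℝ (Fin m) → ℝ := fun τ =>
      Real.log (∑ α ∈ S, mSc S c τSc α x * Real.exp ⟪α, τ⟫);
    let I : EuclideanSpace ℝ (Fin m) → EReal := fun y =>
      ⨆ τ : EuclideanSpace ℝ (Fin m), ((⟪y, τ⟫ - Λ τ : ℝ) : EReal);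
    let δ : EuclideanSpace ℝ (Fin m) → ℝ := fun w =>
      Real.log (chiSc S c (τSc w)) - ⟪w, τSc w⟫;
    (∀ y ∈ interior P, I y = ((δ x - δ y + ⟪x - y, τSc x⟫ : ℝ) : EReal)) ∧
    (∀ y, y ∉ P → I y = (⊤ : EReal))) := by
  intro Λ I δ
  -- S is nonempty
  have hS : S.Nonempty := by
    rcases hPo with ⟨z, hz⟩
    by_contra h
    rw [Finset.not_nonempty_iff_eq_empty] at h
    rw [hP, h] at hz
    simp at hz
  have hχ : ∀ τ, 0 < chiSc S c τ := chiSc_pos hS hc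
  set τx := τSc x with hτx
  have hχx := hχ τx
  -- the moment-generating sum rewrites as `χ(τx + τ)/χ(τx)`
  have hsum : ∀ τ, ∑ α ∈ S, mSc S c τSc α x * Real.exp ⟪α, τ⟫
      = chiSc S c (τx + τ) / chiSc S c τx := by
    intro τ
    rw [chiSc, Finset.sum_div]
    refine Finset.sum_congr rfl fun α hα => ?_
    rw [mSc, inner_add_right, Real.exp_add]
    ring
  have hΛ : ∀ τ, Λ τ = Real.log (chiSc S c (τx + τ)) - Real.log (chiSc S c τx) := by
    intro τ
    show Real.log _ = _
    rw [hsum, Real.log_div (hχ _).ne' hχx.ne']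
  constructor
  · -- Part (i)
    intro y hy
    set τy := τSc y with hτy
    have hμy : muSc S c τy = y := hτ₂ y hy
    have hub : ∀ τ : EuclideanSpace ℝ (Fin m),
        ⟪y, τ⟫ - Λ τ ≤ δ x - δ y + ⟪x - y, τx⟫ := by
      intro τ
      have hle := legendre_max hS hc hμy (τx + τ)
      have h1 : ⟪y, τx + τ⟫ = ⟪y, τx⟫ + ⟪y, τ⟫ := inner_add_right _ _ _
      have h2 : ⟪x - y, τx⟫ = ⟪x, τx⟫ - ⟪y, τx⟫ := inner_sub_left _ _ _
      rw [hΛ τ]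
      show ⟪y, τ⟫ - (Real.log (chiSc S c (τx + τ)) - Real.log (chiSc S c τx))
        ≤ (Real.log (chiSc S c τx) - ⟪x, τx⟫) - (Real.log (chiSc S c τy) - ⟪y, τy⟫)
          + ⟪x - y, τx⟫
      linarith
    have heq : ⟪y, τy - τx⟫ - Λ (τy - τx) = δ x - δ y + ⟪x - y, τx⟫ := by
      have h0 : τx + (τy - τx) = τy := by abel
      have h1 : ⟪y, τy - τx⟫ = ⟪y, τy⟫ - ⟪y, τx⟫ := inner_sub_right _ _ _
      have h2 : ⟪x - y, τx⟫ = ⟪x, τx⟫ - ⟪y, τx⟫ := inner_sub_left _ _ _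
      rw [hΛ, h0]
      show ⟪y, τy - τx⟫ - (Real.log (chiSc S c τy) - Real.log (chiSc S c τx))
        = (Real.log (chiSc S c τx) - ⟪x, τx⟫) - (Real.log (chiSc S c τy) - ⟪y, τy⟫)
          + ⟪x - y, τx⟫
      linarith
    refine le_antisymm (iSup_le fun τ => ?_) ?_
    · exact_mod_cast EReal.coe_le_coe_iff.2 (hub τ)
    · calc ((δ x - δ y + ⟪x - y, τx⟫ : ℝ) : EReal)
          = ((⟪y, τy - τx⟫ - Λ (τy - τx) : ℝ) : EReal) := by rw [heq]
        _ ≤ I y := le_iSup (fun τ => ((⟪y, τ⟫ - Λ τ : ℝ) : EReal)) (τy - τx)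
  · -- Part (ii)
    intro y hy
    have hPc : Convex ℝ P := hP ▸ convex_convexHull ℝ _
    have hPcl : IsClosed P := hP ▸ (S.finite_toSet.isClosed_convexHull (𝕜 := ℝ))
    obtain ⟨f, u, hfu, huy⟩ := geometric_hahn_banach_closed_point hPc hPcl hy
    set v := (InnerProductSpace.toDual ℝ (EuclideanSpace ℝ (Fin m))).symm f with hv
    have hvf : ∀ z : EuclideanSpace ℝ (Fin m), ⟪z, v⟫ = f z := fun z => by
      rw [real_inner_comm]; exact InnerProductSpace.toDual_symm_apply
    have hm1 : ∑ α ∈ S, mSc S c τSc α x = 1 := by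
      simp only [mSc]
      rw [← Finset.sum_div]
      exact div_self hχx.ne'
    -- key lower bound on the term at `N • v` for `N ≥ 0`
    have hterm : ∀ N : ℝ, 0 ≤ N →
        N * (f y - u) ≤ ⟪y, N • v⟫ - Λ (N • v) := by
      intro N hN
      have hΛle : Λ (N • v) ≤ N * u := by
        have hsle : ∑ α ∈ S, mSc S c τSc α x * Real.exp ⟪α, N • v⟫
            ≤ Real.exp (N * u) := by
          calc ∑ α ∈ S, mSc S c τSc α x * Real.exp ⟪α, N • v⟫
              ≤ ∑ α ∈ S, mSc S c τSc α x * Real.exp (N * u) := by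
                refine Finset.sum_le_sum fun α hα => ?_
                have hmpos : 0 ≤ mSc S c τSc α x :=
                  div_nonneg (mul_pos (hc α hα) (Real.exp_pos _)).le hχx.le
                refine mul_le_mul_of_nonneg_left ?_ hmpos
                refine Real.exp_le_exp.2 ?_
                have : ⟪α, N • v⟫ = N * f α := by
                  rw [real_inner_smul_right, hvf]
                rw [this]
                have hαP : α ∈ P := hP ▸ subset_convexHull ℝ _ hα
                exact mul_le_mul_of_nonneg_left (hfu α hαP).le hN
            _ = Real.exp (N * u) := by
                rw [← Finset.sum_mul, hm1, one_mul]
        have hpos : 0 < ∑ α ∈ S, mSc S c τSc α x * Real.exp ⟪α, N • v⟫ :=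
          Finset.sum_pos (fun α hα => mul_pos
            (div_pos (mul_pos (hc α hα) (Real.exp_pos _)) hχx) (Real.exp_pos _)) hS
        calc Λ (N • v) ≤ Real.log (Real.exp (N * u)) := Real.log_le_log hpos hsle
          _ = N * u := Real.log_exp _
      have hyv : ⟪y, N • v⟫ = N * f y := by
        rw [real_inner_smul_right, hvf]
      rw [hyv]
      linarith
    rw [EReal.eq_top_iff_forall_lt]
    intro r
    have hfyu : 0 < f y - u := by linarith
    set N : ℝ := (|r| + 1) / (f y - u) with hNdef
    have hN0 : 0 ≤ N := div_nonneg (by positivity) hfyu.le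
    have hNr : r < N * (f y - u) := by
      rw [hNdef, div_mul_cancel₀ _ hfyu.ne']
      calc r ≤ |r| := le_abs_self r
        _ < |r| + 1 := by linarith
    calc (r : EReal) < ((N * (f y - u) : ℝ) : EReal) := EReal.coe_lt_coe_iff.2 hNr
      _ ≤ ((⟪y, N • v⟫ - Λ (N • v) : ℝ) : EReal) :=
          EReal.coe_le_coe_iff.2 (hterm N hN0)
      _ ≤ I y := le_iSup (fun τ => ((⟪y, τ⟫ - Λ τ : ℝ) : EReal)) (N • v)

end
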